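/- Let G be a bipartite simple graph with nonempty vertex parts L and R such that every vertex in L has degree d_L ≥ 2 and every vertex in R has degree d_R ≥ 2, and suppose every cycle of G has length at least g, where g ≥ 4 is an even integer. Then |L| ≥ Σ_{i=0}^{g/2−1} (d_R − 1)^{⌈i/2⌉} (d_L − 1)^{⌊i/2⌋} and |R| ≥ Σ_{i=0}^{g/2−1} (d_L − 1)^{⌈i/2⌉} (d_R − 1)^{⌊i/2⌋}. -/

import Mathlib

open SimpleGraph Finset

set_option linter.unusedSectionVars false
set_option maxHeartbeats 1000000

section MooreAux

variable {V : Type*} [Fintype V] [DecidableEq V] {G : SimpleGraph V} {L R : Finset V}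



lemma two_paths_cycle : ∀ (n : ℕ) {a b : V} (p q : G.Walk a b),
    p.length + q.length ≤ n → p.IsPath → q.IsPath → p ≠ q →
    ∃ (x : V) (c : G.Walk x x), c.IsCycle ∧ c.length ≤ p.length + q.length := by
  intro n
  induction n with
  | zero =>
    intro a b p q hlen hp hq hne
    have h0 : p.length = 0 := by omega
    have h0' : q.length = 0 := by omega
    cases p with
    | nil =>
      cases q with
      | nil => exact absurd rfl hne
      | cons h q' => simp at h0'
    | cons h p' => simp at h0
  | succ n ih =>
    intro a b p q hlen hp hq hne
    cases p with
    | nil =>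
      have := (SimpleGraph.Walk.isPath_iff_eq_nil (p := q)).mp hq
      exact absurd this.symm hne
    | cons h₁ p' =>
      cases q with
      | nil =>
        exact absurd ((SimpleGraph.Walk.isPath_iff_eq_nil (p := SimpleGraph.Walk.cons h₁ p')).mp hp) hne
      | cons h₂ q' =>
        rename_i y z
        by_cases hyz : y = z
        · subst hyz
          have hne' : p' ≠ q' := by
            intro hh; exact hne (by rw [hh])
          have hp' := hp.of_cons
          have hq' := hq.of_cons
          obtain ⟨x, c, hc, hcl⟩ := ih p' q' (by simp at hlen ⊢; omega) hp' hq' hne'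
          exact ⟨x, c, hc, by simp at hcl ⊢; omega⟩
        · -- direct construction
          have hap' : a ∉ p'.support := ((SimpleGraph.Walk.cons_isPath_iff h₁ p').mp hp).2
          have haq' : a ∉ q'.support := ((SimpleGraph.Walk.cons_isPath_iff h₂ q').mp hq).2
          set t := (p'.append (SimpleGraph.Walk.cons h₂ q').reverse).bypass with ht
          have htp : t.IsPath := SimpleGraph.Walk.bypass_isPath _
          have hedge : s(a, y) ∉ t.edges := by
            intro hmem
            have := SimpleGraph.Walk.edges_bypass_subset _ hmem
            rw [SimpleGraph.Walk.edges_append, List.mem_append] at this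
            rcases this with hm | hm
            · exact hap' (SimpleGraph.Walk.fst_mem_support_of_mem_edges p' hm)
            · rw [SimpleGraph.Walk.edges_reverse, List.mem_reverse] at hm
              rw [SimpleGraph.Walk.edges_cons, List.mem_cons] at hm
              rcases hm with hm | hm
              · rw [Sym2.eq_iff] at hm
                rcases hm with ⟨-, hm⟩ | ⟨-, hm⟩
                · exact hyz hm
                · exact G.loopless.irrefl a (hm ▸ h₁)
              · exact haq' (SimpleGraph.Walk.fst_mem_support_of_mem_edges q' hm)
          refine ⟨a, SimpleGraph.Walk.cons h₁ t, ?_, ?_⟩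
          · exact (SimpleGraph.Walk.cons_isCycle_iff t h₁).mpr ⟨htp, hedge⟩
          · have hlb : t.length ≤ p'.length + (q'.length + 1) := by
              rw [ht]
              simpa using SimpleGraph.Walk.length_bypass_le
                (p'.append (SimpleGraph.Walk.cons h₂ q').reverse)
            simp only [SimpleGraph.Walk.length_cons]
            omega





section helpers
variable {g : ℕ} (hcyc : ∀ (v : V) (c : G.Walk v v), c.IsCycle → g ≤ c.length)

include hcyc in
lemma path_eq_of_short {a b : V} {p q : G.Walk a b}
    (hp : p.IsPath) (hq : q.IsPath) (hlen : p.length + q.length < g) : p = q := by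
  by_contra hne
  obtain ⟨x, c, hc, hcl⟩ := two_paths_cycle (p.length + q.length) p q le_rfl hp hq hne
  exact absurd (hcyc x c hc) (by omega)

lemma exists_shortest {w r : V} (hr : G.Reachable w r) :
    ∃ p : G.Walk w r, p.IsPath ∧ p.length = G.dist w r ∧
      ∀ t ∈ p.support, G.dist t r ≤ G.dist w r ∧ G.dist w t ≤ G.dist w r := by
  obtain ⟨p, hp, hl⟩ := hr.exists_path_of_dist
  refine ⟨p, hp, hl, fun t ht => ?_⟩
  have hspec := p.take_spec ht
  have hlen : (p.takeUntil t ht).length + (p.dropUntil t ht).length = p.length := by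
    conv_rhs => rw [← hspec]
    rw [SimpleGraph.Walk.length_append]
  have h1 := SimpleGraph.dist_le (p.dropUntil t ht)
  have h2 := SimpleGraph.dist_le (p.takeUntil t ht)
  omega

-- uniqueness of "lower neighbour" (Lemma D)
include hcyc in
lemma lower_nbr_unique {x y z r : V} {j : ℕ}
    (hxy : G.Adj x y) (hxz : G.Adj x z)
    (hyr : G.Reachable y r) (hzr : G.Reachable z r)
    (hjy : G.dist y r = j) (hjz : G.dist z r = j)
    (hx : j < G.dist x r) (hlen : 2 * j + 2 < g) : y = z := by
  by_contra hyz
  obtain ⟨py, hpy, hly, hsy⟩ := exists_shortest hyr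
  obtain ⟨pz, hpz, hlz, hsz⟩ := exists_shortest hzr
  have hxy' : x ∉ py.support := fun hm => by
    have := (hsy x hm).1; omega
  have hxz' : x ∉ pz.support := fun hm => by
    have := (hsz x hm).1; omega
  have hW1 : (SimpleGraph.Walk.cons hxy py).IsPath := hpy.cons hxy'
  have hW2 : (SimpleGraph.Walk.cons hxz pz).IsPath := hpz.cons hxz'
  have heq : SimpleGraph.Walk.cons hxy py = SimpleGraph.Walk.cons hxz pz := by
    apply path_eq_of_short hcyc hW1 hW2
    simp only [SimpleGraph.Walk.length_cons]; omega
  have := congrArg SimpleGraph.Walk.support heq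
  rw [SimpleGraph.Walk.support_cons, SimpleGraph.Walk.support_cons,
    py.support_eq_cons, pz.support_eq_cons] at this
  simp at this
  have h2 := congrArg List.head? this
  rw [py.support_eq_cons, pz.support_eq_cons] at h2
  simp only [List.head?_cons, Option.some.injEq] at h2
  exact hyz h2

-- no neighbour at the same level with opposite root (Lemma C)
include hcyc in
lemma no_cross_nbr {x z r r' : V} {i : ℕ} (hrr' : G.Adj r' r) (hxz : G.Adj x z)
    (hxr : G.dist x r = i) (hxr' : G.dist x r' = i + 1)
    (hzr' : G.dist z r' = i) (hzr : G.dist z r = i + 1)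
    (hi : 1 ≤ i) (hlen : 2 * i + 2 < g)
    (hxreach : G.Reachable x r) (hzreach : G.Reachable z r') : False := by
  obtain ⟨pA, hpA, hlA, hsA⟩ := exists_shortest hxreach
  obtain ⟨pz, hpz, hlz, hsz⟩ := exists_shortest hzreach
  -- r is not on pz
  have hrpz : r ∉ pz.support := fun hm => by
    have := (hsz r hm).2; omega
  have hxpz : x ∉ pz.support := fun hm => by
    have := (hsz x hm).1; omega
  -- build pB = cons (x~z) (pz.concat (r'~r))
  have hconc : (pz.concat hrr').IsPath := by
    rw [← SimpleGraph.Walk.isPath_reverse_iff]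
    rw [SimpleGraph.Walk.reverse_concat]
    exact hpz.reverse.cons (by rw [SimpleGraph.Walk.support_reverse]; simpa using hrpz)
  have hxnr : x ≠ r := fun h => by rw [h] at hxr; rw [SimpleGraph.dist_self] at hxr; omega
  have hxconc : x ∉ (pz.concat hrr').support := by
    rw [SimpleGraph.Walk.support_concat, List.mem_append]
    rintro (hm | hm)
    · exact hxpz hm
    · simp at hm; exact hxnr hm
  have hpB : (SimpleGraph.Walk.cons hxz (pz.concat hrr')).IsPath := hconc.cons hxconc
  have heq : pA = SimpleGraph.Walk.cons hxz (pz.concat hrr') := by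
    apply path_eq_of_short hcyc hpA hpB
    rw [SimpleGraph.Walk.length_cons, SimpleGraph.Walk.length_concat]
    omega
  have := congrArg SimpleGraph.Walk.length heq
  rw [SimpleGraph.Walk.length_cons, SimpleGraph.Walk.length_concat] at this
  omega

end helpers




lemma mem_other_side (hdisj : Disjoint L R) (hcover : L ∪ R = Finset.univ) {x : V} :
    x ∈ R ↔ x ∉ L := by
  constructor
  · intro hx hxl; exact Finset.disjoint_left.mp hdisj hxl hx
  · intro hx
    have : x ∈ L ∪ R := by rw [hcover]; exact Finset.mem_univ x
    rcases Finset.mem_union.mp this with h | h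
    · exact absurd h hx
    · exact h

lemma walk_parity (hdisj : Disjoint L R) (hcover : L ∪ R = Finset.univ)
    (hbip : ∀ a b : V, G.Adj a b → (a ∈ L ∧ b ∈ R) ∨ (a ∈ R ∧ b ∈ L))
    {a b : V} (p : G.Walk a b) : Even p.length ↔ (a ∈ L ↔ b ∈ L) := by
  induction p with
  | nil => simp
  | cons h p ih =>
    rename_i c d _
    have hcd : c ∈ L ↔ d ∉ L := by
      rcases hbip c d h with ⟨h1, h2⟩ | ⟨h1, h2⟩
      · rw [mem_other_side hdisj hcover] at h2; tauto
      · rw [mem_other_side hdisj hcover] at h1; tauto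
    rw [SimpleGraph.Walk.length_cons, Nat.even_add_one, ih]
    tauto

lemma dist_parity (hdisj : Disjoint L R) (hcover : L ∪ R = Finset.univ)
    (hbip : ∀ a b : V, G.Adj a b → (a ∈ L ∧ b ∈ R) ∨ (a ∈ R ∧ b ∈ L))
    {w r : V} (hr : G.Reachable w r) (hrl : r ∈ L) :
    Even (G.dist w r) ↔ w ∈ L := by
  obtain ⟨p, hl⟩ := hr.exists_walk_length_eq_dist
  rw [← hl, walk_parity hdisj hcover hbip p]
  tauto

lemma dist_lip_root {w a b : V} (hab : G.Adj a b) (hwa : G.Reachable w a) :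
    G.dist w b ≤ G.dist w a + 1 := by
  obtain ⟨p, hl⟩ := hwa.exists_walk_length_eq_dist
  have := SimpleGraph.dist_le (p.concat hab)
  rwa [SimpleGraph.Walk.length_concat, hl] at this

lemma dist_lip_nbr {x y r : V} (hxy : G.Adj x y) (hxr : G.Reachable x r) :
    G.dist y r ≤ G.dist x r + 1 := by
  obtain ⟨p, hl⟩ := hxr.exists_walk_length_eq_dist
  have := SimpleGraph.dist_le (SimpleGraph.Walk.cons hxy.symm p)
  rw [SimpleGraph.Walk.length_cons, hl] at this; omega

lemma level_struct (hdisj : Disjoint L R) (hcover : L ∪ R = Finset.univ)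
    (hbip : ∀ a b : V, G.Adj a b → (a ∈ L ∧ b ∈ R) ∨ (a ∈ R ∧ b ∈ L))
    {u v : V} (huv : G.Adj u v) (hu : u ∈ L) (hv : v ∈ R)
    {w : V} (hw : w ∈ L) (hwr : G.Reachable w u) {i : ℕ}
    (hmin : min (G.dist w u) (G.dist w v) = i) :
    (i % 2 = 0 → G.dist w u = i ∧ G.dist w v = i + 1) ∧
    (i % 2 = 1 → G.dist w v = i ∧ G.dist w u = i + 1) := by
  have hbip' : ∀ a b : V, G.Adj a b → (a ∈ R ∧ b ∈ L) ∨ (a ∈ L ∧ b ∈ R) :=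
    fun a b h => (hbip a b h).symm
  have hcover' : R ∪ L = Finset.univ := by rwa [Finset.union_comm]
  have hwv : G.Reachable w v := hwr.trans huv.reachable
  have h1 : Even (G.dist w u) := (dist_parity hdisj hcover hbip hwr hu).mpr hw
  have h2 : ¬ Even (G.dist w v) := by
    rw [dist_parity hdisj.symm hcover' hbip' hwv hv, mem_other_side hdisj hcover]
    simpa using hw
  have h3 : G.dist w u ≤ G.dist w v + 1 := dist_lip_root huv.symm hwv
  have h4 : G.dist w v ≤ G.dist w u + 1 := dist_lip_root huv hwr
  rw [Nat.even_iff] at h1 h2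
  omega

lemma double_count [DecidableEq V] [DecidableRel G.Adj] {A B : Finset V} {c : ℕ}
    (hA : ∀ a ∈ A, c ≤ (B.filter (fun b => G.Adj a b)).card)
    (hB : ∀ b ∈ B, (A.filter (fun a => G.Adj a b)).card ≤ 1) :
    c * A.card ≤ B.card := by
  calc c * A.card = ∑ _a ∈ A, c := by rw [Finset.sum_const, smul_eq_mul, mul_comm]
    _ ≤ ∑ a ∈ A, (B.filter (fun b => G.Adj a b)).card := Finset.sum_le_sum hA
    _ = ∑ a ∈ A, ∑ b ∈ B, if G.Adj a b then 1 else 0 := by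
        apply Finset.sum_congr rfl; intros; rw [Finset.card_filter]
    _ = ∑ b ∈ B, ∑ a ∈ A, if G.Adj a b then 1 else 0 := Finset.sum_comm
    _ = ∑ b ∈ B, (A.filter (fun a => G.Adj a b)).card := by
        apply Finset.sum_congr rfl; intros; rw [Finset.card_filter]
    _ ≤ ∑ _b ∈ B, 1 := Finset.sum_le_sum hB
    _ = B.card := by simp


lemma key_step [DecidableRel G.Adj]
    (hdisj : Disjoint L R) (hcover : L ∪ R = Finset.univ)
    (hbip : ∀ a b : V, G.Adj a b → (a ∈ L ∧ b ∈ R) ∨ (a ∈ R ∧ b ∈ L))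
    {dL : ℕ} (hdegL : ∀ w ∈ L, G.degree w = dL)
    {g : ℕ} (hcyc : ∀ (x : V) (c : G.Walk x x), c.IsCycle → g ≤ c.length)
    {u v : V} (huv : G.Adj u v) (hu : u ∈ L) (hv : v ∈ R)
    {i : ℕ} (hi : 1 ≤ i) (hig : 2 * i + 4 ≤ g) :
    (dL - 1) * (L.filter (fun w => min (G.dist w u) (G.dist w v) = i)).card
      ≤ (R.filter (fun w => min (G.dist w u) (G.dist w v) = i + 1)).card := by
  have hbip' : ∀ a b : V, G.Adj a b → (a ∈ R ∧ b ∈ L) ∨ (a ∈ L ∧ b ∈ R) :=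
    fun a b h => (hbip a b h).symm
  have hcover' : R ∪ L = Finset.univ := by rwa [Finset.union_comm]
  have hreach : ∀ (w : V) (k : ℕ), 1 ≤ k → min (G.dist w u) (G.dist w v) = k →
      G.Reachable w u ∧ G.Reachable w v := by
    intro w k hk hmin
    have h1 : G.dist w u ≠ 0 := by omega
    have hr : G.Reachable w u := SimpleGraph.Reachable.of_dist_ne_zero h1
    exact ⟨hr, hr.trans huv.reachable⟩
  -- membership in sides
  have hsideR : ∀ x y : V, x ∈ L → G.Adj x y → y ∈ R := by
    intro x y hx hxy
    rcases hbip x y hxy with ⟨_, h⟩ | ⟨h, _⟩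
    · exact h
    · exact absurd h (Finset.disjoint_left.mp hdisj hx)
  have hsideL : ∀ x y : V, x ∈ R → G.Adj x y → y ∈ L := by
    intro x y hx hxy
    rcases hbip x y hxy with ⟨h, _⟩ | ⟨_, h⟩
    · exact absurd h (Finset.disjoint_left.mp hdisj · hx)
    · exact h
  apply double_count (G := G)
  · -- sender side
    intro x hx
    rw [Finset.mem_filter] at hx
    obtain ⟨hxL, hfx⟩ := hx
    obtain ⟨hxu, hxv⟩ := hreach x i hi hfx
    have hstructx := level_struct hdisj hcover hbip huv hu hv hxL hxu hfx
    -- no neighbour at the same level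
    have hnotsame : ∀ y : V, G.Adj x y → min (G.dist y u) (G.dist y v) ≠ i := by
      intro y hxy hfy
      have hyR : y ∈ R := hsideR x y hxL hxy
      have hyu : G.Reachable y u := hxy.symm.reachable.trans hxu
      have hyv : G.Reachable y v := hyu.trans huv.reachable
      have hstructy := level_struct hdisj.symm hcover' hbip' huv.symm hv hu hyR hyv
        (i := i) (by rw [min_comm]; exact hfy)
      rcases Nat.even_or_odd i with he | ho
      · have h1 := hstructx.1 (Nat.even_iff.mp he)
        have h2 := hstructy.1 (Nat.even_iff.mp he)
        exact no_cross_nbr hcyc huv.symm hxy h1.1 h1.2 h2.1 h2.2 hi (by omega) hxu hyv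
      · have h1 := hstructx.2 (Nat.odd_iff.mp ho)
        have h2 := hstructy.2 (Nat.odd_iff.mp ho)
        exact no_cross_nbr hcyc huv hxy h1.1 h1.2 h2.1 h2.2 hi (by omega) hxv hyu
    -- at most one lower neighbour
    have hbadcard : ((G.neighborFinset x).filter
        (fun y => min (G.dist y u) (G.dist y v) ≤ i)).card ≤ 1 := by
      rw [Finset.card_le_one]
      intro y hy z hz
      rw [Finset.mem_filter, SimpleGraph.mem_neighborFinset] at hy hz
      obtain ⟨hxy, hfy⟩ := hy
      obtain ⟨hxz, hfz⟩ := hz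
      have hyR : y ∈ R := hsideR x y hxL hxy
      have hzR : z ∈ R := hsideR x z hxL hxz
      have hyu : G.Reachable y u := hxy.symm.reachable.trans hxu
      have hzu : G.Reachable z u := hxz.symm.reachable.trans hxu
      have hyv : G.Reachable y v := hyu.trans huv.reachable
      have hzv : G.Reachable z v := hzu.trans huv.reachable
      have hylip1 : G.dist x u ≤ G.dist y u + 1 := dist_lip_nbr hxy.symm hyu
      have hylip2 : G.dist x v ≤ G.dist y v + 1 := dist_lip_nbr hxy.symm hyv
      have hzlip1 : G.dist x u ≤ G.dist z u + 1 := dist_lip_nbr hxz.symm hzu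
      have hzlip2 : G.dist x v ≤ G.dist z v + 1 := dist_lip_nbr hxz.symm hzv
      have hfy' : min (G.dist y u) (G.dist y v) = i - 1 := by
        have := hnotsame y hxy; omega
      have hfz' : min (G.dist z u) (G.dist z v) = i - 1 := by
        have := hnotsame z hxz; omega
      have hstructy := level_struct hdisj.symm hcover' hbip' huv.symm hv hu hyR hyv
        (i := i - 1) (by rw [min_comm]; exact hfy')
      have hstructz := level_struct hdisj.symm hcover' hbip' huv.symm hv hu hzR hzv
        (i := i - 1) (by rw [min_comm]; exact hfz')
      rcases Nat.even_or_odd i with he | ho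
      · -- i even, so i-1 odd, neighbours are u-rooted; x has dist x u = i
        have h1 := hstructy.2 (by have := Nat.even_iff.mp he; omega)
        have h2 := hstructz.2 (by have := Nat.even_iff.mp he; omega)
        have h3 := hstructx.1 (Nat.even_iff.mp he)
        exact lower_nbr_unique hcyc hxy hxz hyu hzu h1.1 h2.1 (by omega) (by omega)
      · -- i odd, i-1 even, neighbours are v-rooted; dist x v = i
        have h1 := hstructy.1 (by have := Nat.odd_iff.mp ho; omega)
        have h2 := hstructz.1 (by have := Nat.odd_iff.mp ho; omega)
        have h3 := hstructx.2 (Nat.odd_iff.mp ho)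
        exact lower_nbr_unique hcyc hxy hxz hyv hzv h1.1 h2.1 (by omega) (by omega)
    -- good neighbours
    have hgood : (G.neighborFinset x).filter
        (fun y => ¬ min (G.dist y u) (G.dist y v) ≤ i) ⊆
        (R.filter (fun w => min (G.dist w u) (G.dist w v) = i + 1)).filter
          (fun b => G.Adj x b) := by
      intro y hy
      rw [Finset.mem_filter, SimpleGraph.mem_neighborFinset] at hy
      obtain ⟨hxy, hfy⟩ := hy
      have hyR : y ∈ R := hsideR x y hxL hxy
      have hyu : G.Reachable y u := hxy.symm.reachable.trans hxu
      have hyv : G.Reachable y v := hyu.trans huv.reachable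
      have l1 : G.dist y u ≤ G.dist x u + 1 := dist_lip_nbr hxy hxu
      have l2 : G.dist y v ≤ G.dist x v + 1 := dist_lip_nbr hxy hxv
      rw [Finset.mem_filter, Finset.mem_filter]
      exact ⟨⟨hyR, by omega⟩, hxy⟩
    have hcards := Finset.card_filter_add_card_filter_not
      (s := G.neighborFinset x) (p := fun y => min (G.dist y u) (G.dist y v) ≤ i)
    have hdeg : (G.neighborFinset x).card = dL := by
      rw [G.card_neighborFinset_eq_degree]; exact hdegL x hxL
    have := Finset.card_le_card hgood
    omega
  · -- receiver side
    intro b hb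
    rw [Finset.mem_filter] at hb
    obtain ⟨hbR, hfb⟩ := hb
    obtain ⟨hbu, hbv⟩ := hreach b (i + 1) (by omega) hfb
    rw [Finset.card_le_one]
    intro y hy z hz
    rw [Finset.mem_filter, Finset.mem_filter] at hy hz
    obtain ⟨⟨hyL, hfy⟩, hyb⟩ := hy
    obtain ⟨⟨hzL, hfz⟩, hzb⟩ := hz
    obtain ⟨hyu, hyv⟩ := hreach y i hi hfy
    obtain ⟨hzu, hzv⟩ := hreach z i hi hfz
    have hstructy := level_struct hdisj hcover hbip huv hu hv hyL hyu hfy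
    have hstructz := level_struct hdisj hcover hbip huv hu hv hzL hzu hfz
    rcases Nat.even_or_odd i with he | ho
    · have h1 := hstructy.1 (Nat.even_iff.mp he)
      have h2 := hstructz.1 (Nat.even_iff.mp he)
      exact lower_nbr_unique hcyc hyb.symm hzb.symm hyu hzu h1.1 h2.1 (by omega) (by omega)
    · have h1 := hstructy.2 (Nat.odd_iff.mp ho)
      have h2 := hstructz.2 (Nat.odd_iff.mp ho)
      exact lower_nbr_unique hcyc hyb.symm hzb.symm hyv hzv h1.1 h2.1 (by omega) (by omega)

lemma key_base [DecidableRel G.Adj]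
    (hdisj : Disjoint L R) (hcover : L ∪ R = Finset.univ)
    (hbip : ∀ a b : V, G.Adj a b → (a ∈ L ∧ b ∈ R) ∨ (a ∈ R ∧ b ∈ L))
    {dR : ℕ} {u v : V} (huv : G.Adj u v) (hu : u ∈ L) (hv : v ∈ R)
    (hdegv : G.degree v = dR) :
    dR - 1 ≤ (L.filter (fun w => min (G.dist w u) (G.dist w v) = 1)).card := by
  have hsub : (G.neighborFinset v).erase u ⊆
      L.filter (fun w => min (G.dist w u) (G.dist w v) = 1) := by
    intro y hy
    rw [Finset.mem_erase, SimpleGraph.mem_neighborFinset] at hy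
    obtain ⟨hyu, hvy⟩ := hy
    have hyL : y ∈ L := by
      rcases hbip v y hvy with ⟨h1, _⟩ | ⟨_, h2⟩
      · exact absurd h1 (Finset.disjoint_right.mp hdisj hv)
      · exact h2
    have hd1 : G.dist y v = 1 := by
      rw [SimpleGraph.dist_comm]; exact SimpleGraph.dist_eq_one_iff_adj.mpr hvy
    have hry : G.Reachable y v := hvy.symm.reachable
    have hryu : G.Reachable y u := hry.trans huv.symm.reachable
    have h2 : G.dist y u ≤ 2 := by
      have := dist_lip_root huv.symm hry; omega
    have hne : G.dist y u ≠ 0 := by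
      rw [SimpleGraph.dist_ne_zero_iff_ne_and_reachable]; exact ⟨hyu, hryu⟩
    have heven : Even (G.dist y u) := (dist_parity hdisj hcover hbip hryu hu).mpr hyL
    rw [Nat.even_iff] at heven
    rw [Finset.mem_filter]
    exact ⟨hyL, by omega⟩
  calc dR - 1 = ((G.neighborFinset v).erase u).card := by
        rw [Finset.card_erase_of_mem (by rw [SimpleGraph.mem_neighborFinset]; exact huv.symm),
          SimpleGraph.card_neighborFinset_eq_degree, hdegv]
    _ ≤ _ := Finset.card_le_card hsub

lemma key [DecidableRel G.Adj]
    (hdisj : Disjoint L R) (hcover : L ∪ R = Finset.univ)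
    (hbip : ∀ a b : V, G.Adj a b → (a ∈ L ∧ b ∈ R) ∨ (a ∈ R ∧ b ∈ L))
    {dL dR : ℕ}
    (hdegL : ∀ w ∈ L, G.degree w = dL) (hdegR : ∀ w ∈ R, G.degree w = dR)
    {g : ℕ} (hgeven : Even g)
    (hcyc : ∀ (x : V) (c : G.Walk x x), c.IsCycle → g ≤ c.length)
    {u v : V} (huv : G.Adj u v) (hu : u ∈ L) (hv : v ∈ R) :
    (∑ i ∈ Finset.range (g / 2), (dR - 1) ^ ((i + 1) / 2) * (dL - 1) ^ (i / 2))
      ≤ L.card := by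
  have hg2 : g % 2 = 0 := Nat.even_iff.mp hgeven
  have hbip' : ∀ a b : V, G.Adj a b → (a ∈ R ∧ b ∈ L) ∨ (a ∈ L ∧ b ∈ R) :=
    fun a b h => (hbip a b h).symm
  have hcover' : R ∪ L = Finset.univ := by rwa [Finset.union_comm]
  have hswap : ∀ (S : Finset V) (k : ℕ),
      (S.filter (fun w => min (G.dist w v) (G.dist w u) = k)) =
      (S.filter (fun w => min (G.dist w u) (G.dist w v) = k)) := by
    intro S k
    apply Finset.filter_congr
    intro w _
    rw [min_comm]
  -- base at level 0
  have hbase0L : 1 ≤ (L.filter (fun w => min (G.dist w u) (G.dist w v) = 0)).card := by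
    apply Finset.card_pos.mpr
    refine ⟨u, ?_⟩
    rw [Finset.mem_filter]
    refine ⟨hu, ?_⟩
    have h1 : G.dist u u = 0 := SimpleGraph.dist_self
    have h2 : G.dist u v = 1 := SimpleGraph.dist_eq_one_iff_adj.mpr huv
    omega
  have hbase0R : 1 ≤ (R.filter (fun w => min (G.dist w u) (G.dist w v) = 0)).card := by
    apply Finset.card_pos.mpr
    refine ⟨v, ?_⟩
    rw [Finset.mem_filter]
    refine ⟨hv, ?_⟩
    have h1 : G.dist v v = 0 := SimpleGraph.dist_self
    have h2 : G.dist v u = 1 := SimpleGraph.dist_eq_one_iff_adj.mpr huv.symm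
    omega
  have hbase1L : dR - 1 ≤ (L.filter (fun w => min (G.dist w u) (G.dist w v) = 1)).card :=
    key_base hdisj hcover hbip huv hu hv (hdegR v hv)
  have hbase1R : dL - 1 ≤ (R.filter (fun w => min (G.dist w u) (G.dist w v) = 1)).card := by
    rw [← hswap R 1]
    exact key_base hdisj.symm hcover' hbip' huv.symm hv hu (hdegL u hu)
  have hmain : ∀ k, k < g / 2 →
      (dR - 1) ^ ((k + 1) / 2) * (dL - 1) ^ (k / 2)
        ≤ (L.filter (fun w => min (G.dist w u) (G.dist w v) = k)).card ∧
      (dL - 1) ^ ((k + 1) / 2) * (dR - 1) ^ (k / 2)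
        ≤ (R.filter (fun w => min (G.dist w u) (G.dist w v) = k)).card := by
    intro k
    induction k with
    | zero =>
      intro _
      constructor
      · simpa using hbase0L
      · simpa using hbase0R
    | succ k ih =>
      intro hk
      have hk' : k < g / 2 := by omega
      obtain ⟨ihL, ihR⟩ := ih hk'
      rcases Nat.eq_zero_or_pos k with rfl | hk1
      · constructor
        · simpa using hbase1L
        · simpa using hbase1R
      · have hig : 2 * k + 4 ≤ g := by omega
        have stepR : (dL - 1) *
            (L.filter (fun w => min (G.dist w u) (G.dist w v) = k)).card
            ≤ (R.filter (fun w => min (G.dist w u) (G.dist w v) = k + 1)).card :=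
          key_step hdisj hcover hbip hdegL hcyc huv hu hv hk1 hig
        have stepL : (dR - 1) *
            (R.filter (fun w => min (G.dist w u) (G.dist w v) = k)).card
            ≤ (L.filter (fun w => min (G.dist w u) (G.dist w v) = k + 1)).card := by
          rw [← hswap R k, ← hswap L (k + 1)]
          exact key_step hdisj.symm hcover' hbip' hdegR hcyc huv.symm hv hu hk1 hig
        have he1 : (k + 1 + 1) / 2 = k / 2 + 1 := by omega
        have he2 : (k + 1) / 2 = (k + 1) / 2 := rfl
        constructor
        · calc (dR - 1) ^ ((k + 1 + 1) / 2) * (dL - 1) ^ ((k + 1) / 2)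
              = (dR - 1) * ((dL - 1) ^ ((k + 1) / 2) * (dR - 1) ^ (k / 2)) := by
                rw [he1, pow_succ]; ring
            _ ≤ (dR - 1) *
                (R.filter (fun w => min (G.dist w u) (G.dist w v) = k)).card :=
                Nat.mul_le_mul_left _ ihR
            _ ≤ _ := stepL
        · calc (dL - 1) ^ ((k + 1 + 1) / 2) * (dR - 1) ^ ((k + 1) / 2)
              = (dL - 1) * ((dR - 1) ^ ((k + 1) / 2) * (dL - 1) ^ (k / 2)) := by
                rw [he1, pow_succ]; ring
            _ ≤ (dL - 1) *
                (L.filter (fun w => min (G.dist w u) (G.dist w v) = k)).card :=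
                Nat.mul_le_mul_left _ ihL
            _ ≤ _ := stepR
  calc (∑ i ∈ Finset.range (g / 2), (dR - 1) ^ ((i + 1) / 2) * (dL - 1) ^ (i / 2))
      ≤ ∑ i ∈ Finset.range (g / 2),
          (L.filter (fun w => min (G.dist w u) (G.dist w v) = i)).card :=
        Finset.sum_le_sum (fun i hi => (hmain i (Finset.mem_range.mp hi)).1)
    _ = ((Finset.range (g / 2)).biUnion
          (fun i => L.filter (fun w => min (G.dist w u) (G.dist w v) = i))).card := by
        rw [Finset.card_biUnion]
        intro k1 _ k2 _ hne
        rw [Function.onFun, Finset.disjoint_left]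
        intro w hw1 hw2
        rw [Finset.mem_filter] at hw1 hw2
        exact hne (hw1.2.symm.trans hw2.2)
    _ ≤ L.card := Finset.card_le_card
        (Finset.biUnion_subset.mpr (fun k _ => Finset.filter_subset _ _))

end MooreAux

/-- **Moore bound for bipartite graphs.** Let `G` be a bipartite
simple graph with nonempty parts `L` and `R`, every vertex of `L` of degree
`dL ≥ 2` and every vertex of `R` of degree `dR ≥ 2`, and suppose every cycle of
`G` has length at least `g`, where `g ≥ 4` is even.  Then
`|L| ≥ Σ_{i=0}^{g/2-1} (dR-1)^⌈i/2⌉ (dL-1)^⌊i/2⌋` and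
`|R| ≥ Σ_{i=0}^{g/2-1} (dL-1)^⌈i/2⌉ (dR-1)^⌊i/2⌋`. -/
theorem bipartite_moore_bound {V : Type*} [Fintype V] [DecidableEq V]
    (G : SimpleGraph V) [DecidableRel G.Adj]
    (L R : Finset V) (hdisj : Disjoint L R) (hcover : L ∪ R = Finset.univ)
    (hL : L.Nonempty) (hR : R.Nonempty)
    (hbip : ∀ u v : V, G.Adj u v → (u ∈ L ∧ v ∈ R) ∨ (u ∈ R ∧ v ∈ L))
    (dL dR : ℕ) (hdL : 2 ≤ dL) (hdR : 2 ≤ dR)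
    (hdegL : ∀ v ∈ L, G.degree v = dL) (hdegR : ∀ v ∈ R, G.degree v = dR)
    (g : ℕ) (hg : 4 ≤ g) (hgeven : Even g)
    (hcyc : ∀ (v : V) (c : G.Walk v v), c.IsCycle → g ≤ c.length) :
    (∑ i ∈ Finset.range (g / 2), (dR - 1) ^ ((i + 1) / 2) * (dL - 1) ^ (i / 2))
        ≤ L.card ∧
    (∑ i ∈ Finset.range (g / 2), (dL - 1) ^ ((i + 1) / 2) * (dR - 1) ^ (i / 2))
        ≤ R.card := by
  obtain ⟨u, hu⟩ := hL
  have hdpos : 0 < G.degree u := by have := hdegL u hu; omega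
  obtain ⟨v, huv⟩ : ∃ v, G.Adj u v := by
    rw [← SimpleGraph.card_neighborFinset_eq_degree] at hdpos
    obtain ⟨v, hv⟩ := Finset.card_pos.mp hdpos
    rw [SimpleGraph.mem_neighborFinset] at hv
    exact ⟨v, hv⟩
  have hvR : v ∈ R := by
    rcases hbip u v huv with ⟨_, h⟩ | ⟨h, _⟩
    · exact h
    · exact absurd h (Finset.disjoint_left.mp hdisj hu)
  have hbip' : ∀ a b : V, G.Adj a b → (a ∈ R ∧ b ∈ L) ∨ (a ∈ L ∧ b ∈ R) :=
    fun a b h => (hbip a b h).symm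
  have hcover' : R ∪ L = Finset.univ := by rwa [Finset.union_comm]
  exact ⟨key hdisj hcover hbip hdegL hdegR hgeven hcyc huv hu hvR,
         key hdisj.symm hcover' hbip' hdegR hdegL hgeven hcyc huv.symm hvR hu⟩
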